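/- Let (X_i)_{i∈ℕ} be an i.i.d. sequence of samples from μ, and for each T let Y_T^max = max_{1≤i≤T} f(X_i). Let (ω_T)_T be any sequence of positive reals with ω_T → ∞ and ω_T = o(T). Then (T/ω_T)^{1/d_s}·(f* − Y_T^max) converges to 0 in probability, i.e. for every β > 0, the probability that (T/ω_T)^{1/d_s}·(f* − Y_T^max) > β tends to 0 as T → ∞. -/

import Mathlib

open MeasureTheory ProbabilityTheory Real Filter

/-- **Random search converges in probability (Theorem `thm:rs-asymp`).**
For i.i.d. samples `(X i)` from `μ`, `Y T = max_{1 ≤ i ≤ T} f (X i)`, and any positive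
sequence `ω_T → ∞` with `ω_T = o(T)`, the quantity `(T / ω_T)^{1/ds} (f* - Y T)`
converges to `0` in probability. -/
theorem random_search_convergence_in_probability
    {𝒳 : Type*} [MetricSpace 𝒳] [CompactSpace 𝒳] [MeasurableSpace 𝒳] [BorelSpace 𝒳]
    (μ : Measure 𝒳) [IsProbabilityMeasure μ]
    (f : 𝒳 → ℝ) (L : ℝ) (hL : 0 ≤ L) (hf : LipschitzWith L.toNNReal f)
    (fstar fmin Θ : ℝ)
    (hfstar : fstar = ⨆ x, f x) (hfmin : fmin = ⨅ x, f x)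
    (hΘ : Θ = Metric.diam (Set.univ : Set 𝒳))
    (ds κs : ℝ) (hds : 0 < ds) (hκs : κs ∈ Set.Ioc (0 : ℝ) 1)
    (hscatter : ∀ α ∈ Set.Ioc (0 : ℝ) 1,
      μ {x | f x < fstar - α * (fstar - fmin)} ≤ ENNReal.ofReal (1 - κs * α ^ ds))
    {Ω : Type*} [MeasurableSpace Ω] (P : Measure Ω) [IsProbabilityMeasure P]
    (X : ℕ → Ω → 𝒳) (hXmeas : ∀ i, Measurable (X i))
    (hiid : iIndepFun X P)
    (hlaw : ∀ i, Measure.map (X i) P = μ)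
    (w : ℕ → ℝ) (hwpos : ∀ T, 0 < w T)
    (hw_top : Tendsto w atTop atTop)
    (hw_o : Tendsto (fun T : ℕ => w T / T) atTop (nhds 0))
    (β : ℝ) (hβ : 0 < β) :
    Tendsto
      (fun T : ℕ =>
        P {ω | ((T : ℝ) / w T) ^ ((1 : ℝ) / ds) * (fstar - ⨆ i : Fin T, f (X i ω)) > β})
      atTop (nhds 0) := by
  -- 𝒳 is nonempty
  have hne : Nonempty 𝒳 := by
    by_contra h
    rw [not_nonempty_iff] at h
    have h1 : μ Set.univ = 1 := measure_univ
    rw [Set.univ_eq_empty_iff.2 h, measure_empty] at h1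
    exact zero_ne_one h1
  have hfc : Continuous f := hf.continuous
  have hbdd : BddAbove (Set.range f) := (isCompact_range hfc).bddAbove
  have hbddb : BddBelow (Set.range f) := (isCompact_range hfc).bddBelow
  have hle : ∀ x, f x ≤ fstar := fun x => hfstar ▸ le_ciSup hbdd x
  have hge : ∀ x, fmin ≤ f x := fun x => hfmin ▸ ciInf_le hbddb x
  have hΔ0 : 0 ≤ fstar - fmin := by
    obtain ⟨x⟩ := hne; linarith [hle x, hge x]
  rcases eq_or_lt_of_le hΔ0 with hΔ | hΔ
  · -- degenerate case: f is constant
    have hconst : ∀ x, f x = fstar := fun x => le_antisymm (hle x) (by linarith [hge x])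
    have hev : (fun T : ℕ =>
        P {ω | ((T : ℝ) / w T) ^ ((1 : ℝ) / ds) * (fstar - ⨆ i : Fin T, f (X i ω)) > β})
        =ᶠ[atTop] (fun _ : ℕ => 0) := by
      filter_upwards [eventually_ge_atTop 1] with T hT
      have : {ω : Ω | ((T : ℝ) / w T) ^ ((1 : ℝ) / ds) * (fstar - ⨆ i : Fin T, f (X i ω)) > β}
          = ∅ := by
        ext ω
        simp only [Set.mem_setOf_eq, Set.mem_empty_iff_false, iff_false, not_lt]
        have hT' : Nonempty (Fin T) := Fin.pos_iff_nonempty.mp hT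
        have : (⨆ i : Fin T, f (X i ω)) = fstar := by
          simp only [hconst]; exact ciSup_const
        rw [this]
        simp [le_of_lt hβ]
      rw [this, measure_empty]
    exact (Tendsto.congr' hev.symm tendsto_const_nhds)
  · -- main case
    set Δ : ℝ := fstar - fmin with hΔdef
    have hβΔ : 0 < β / Δ := div_pos hβ hΔ
    set c : ℝ := κs * (β / Δ) ^ ds with hc
    have hcpos : 0 < c := mul_pos hκs.1 (Real.rpow_pos_of_pos hβΔ ds)
    -- upper bound sequence tends to 0
    have hub : Tendsto (fun T : ℕ => ENNReal.ofReal (Real.exp (-(c * w T)))) atTop (nhds 0) := by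
      have h1 : Tendsto (fun T : ℕ => -(c * w T)) atTop atBot :=
        tendsto_neg_atTop_atBot.comp (hw_top.const_mul_atTop hcpos)
      have h2 : Tendsto (fun T : ℕ => Real.exp (-(c * w T))) atTop (nhds 0) :=
        Real.tendsto_exp_atBot.comp h1
      have := (ENNReal.continuous_ofReal.tendsto 0).comp h2
      simpa [Function.comp_def] using this
    -- α T small eventually
    set α : ℕ → ℝ := fun T => β * (w T / T) ^ ((1 : ℝ) / ds) / Δ with hα
    have hα_tendsto : Tendsto α atTop (nhds 0) := by
      have h1 : Tendsto (fun T : ℕ => (w T / T) ^ ((1 : ℝ) / ds)) atTop (nhds 0) := by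
        have := hw_o.rpow_const (p := (1 : ℝ) / ds) (Or.inr (by positivity))
        rwa [Real.zero_rpow (by positivity : (1:ℝ)/ds ≠ 0)] at this
      have h2 := (h1.const_mul β).div_const Δ
      simp only [mul_zero, zero_div] at h2
      exact h2
    have hα_le1 : ∀ᶠ T in atTop, α T ≤ 1 :=
      hα_tendsto.eventually_le_const one_pos
    -- main bound
    have hbound : ∀ᶠ T : ℕ in atTop,
        P {ω | ((T : ℝ) / w T) ^ ((1 : ℝ) / ds) * (fstar - ⨆ i : Fin T, f (X i ω)) > β}
          ≤ ENNReal.ofReal (Real.exp (-(c * w T))) := by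
      filter_upwards [eventually_ge_atTop 1, hα_le1] with T hT1 hαT
      have hTpos : (0 : ℝ) < T := by exact_mod_cast hT1
      have hwT : 0 < w T := hwpos T
      have hq0 : (0 : ℝ) < w T / T := div_pos hwT hTpos
      have hr0 : (0 : ℝ) < (w T / T) ^ ((1 : ℝ) / ds) := Real.rpow_pos_of_pos hq0 _
      have hαpos : 0 < α T := by
        apply div_pos (mul_pos hβ hr0) hΔ
      -- the target set
      set A : Set 𝒳 := {x | f x < fstar - α T * Δ} with hA
      have hAmeas : MeasurableSet A := measurableSet_lt hfc.measurable measurable_const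
      -- event inclusion
      have hsub : {ω : Ω | ((T : ℝ) / w T) ^ ((1 : ℝ) / ds) * (fstar - ⨆ i : Fin T, f (X i ω)) > β}
          ⊆ ⋂ i ∈ Finset.range T, X i ⁻¹' A := by
        intro ω hω
        simp only [Set.mem_setOf_eq] at hω
        have hinv : ((T : ℝ) / w T) ^ ((1 : ℝ) / ds) = ((w T / T) ^ ((1 : ℝ) / ds))⁻¹ := by
          rw [← Real.inv_rpow (le_of_lt hq0), inv_div]
        rw [hinv] at hω
        have hgap : fstar - (⨆ i : Fin T, f (X i ω)) > β * (w T / T) ^ ((1 : ℝ) / ds) := by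
          rw [gt_iff_lt, inv_mul_eq_div, lt_div_iff₀ hr0] at hω
          exact hω
        have hαΔ : α T * Δ = β * (w T / T) ^ ((1 : ℝ) / ds) := by
          show β * (w T / T) ^ ((1 : ℝ) / ds) / Δ * Δ = _
          exact div_mul_cancel₀ _ hΔ.ne'
        simp only [Set.mem_iInter, Finset.mem_range, Set.mem_preimage]
        intro i hi
        have hT' : Nonempty (Fin T) := Fin.pos_iff_nonempty.mp hT1
        have hle' : f (X i ω) ≤ ⨆ j : Fin T, f (X (j : ℕ) ω) :=
          le_ciSup (f := fun j : Fin T => f (X (j : ℕ) ω))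
            (Set.Finite.bddAbove (Set.finite_range _)) (⟨i, hi⟩ : Fin T)
        simp only [hA, Set.mem_setOf_eq, hαΔ]
        linarith
      -- independence
      have hprod : P (⋂ i ∈ Finset.range T, X i ⁻¹' A) = μ A ^ T := by
        rw [hiid.measure_inter_preimage_eq_mul (Finset.range T) (sets := fun _ => A)
          (fun i _ => hAmeas)]
        have : ∀ i, P (X i ⁻¹' A) = μ A := fun i => by
          rw [← hlaw i, Measure.map_apply (hXmeas i) hAmeas]
        simp [this]
      -- scatter bound
      have hμA : μ A ≤ ENNReal.ofReal (1 - κs * α T ^ ds) :=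
        hscatter (α T) ⟨hαpos, hαT⟩
      have hq : 0 ≤ 1 - κs * α T ^ ds := by
        have h1 : α T ^ ds ≤ 1 :=
          Real.rpow_le_one (le_of_lt hαpos) hαT (le_of_lt hds)
        nlinarith [hκs.1.le, hκs.2, Real.rpow_pos_of_pos hαpos ds]
      -- exponent computation
      have hαds : α T ^ ds = (β / Δ) ^ ds * (w T / T) := by
        have : α T = (β / Δ) * (w T / T) ^ ((1 : ℝ) / ds) := by
          rw [hα]; ring
        rw [this, Real.mul_rpow (le_of_lt hβΔ) (le_of_lt hr0)]
        congr 1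
        rw [← Real.rpow_mul (le_of_lt hq0), one_div, inv_mul_cancel₀ (ne_of_gt hds),
          Real.rpow_one]
      have hTκ : (T : ℝ) * (κs * α T ^ ds) = c * w T := by
        rw [hαds, hc]
        field_simp
      calc P {ω : Ω | ((T : ℝ) / w T) ^ ((1 : ℝ) / ds) * (fstar - ⨆ i : Fin T, f (X i ω)) > β}
          ≤ P (⋂ i ∈ Finset.range T, X i ⁻¹' A) := measure_mono hsub
        _ = μ A ^ T := hprod
        _ ≤ ENNReal.ofReal (1 - κs * α T ^ ds) ^ T := pow_le_pow_left' hμA T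
        _ = ENNReal.ofReal ((1 - κs * α T ^ ds) ^ T) := by
            rw [ENNReal.ofReal_pow hq]
        _ ≤ ENNReal.ofReal (Real.exp (-(c * w T))) := by
            apply ENNReal.ofReal_le_ofReal
            have h1 : 1 - κs * α T ^ ds ≤ Real.exp (-(κs * α T ^ ds)) := by
              linarith [Real.add_one_le_exp (-(κs * α T ^ ds))]
            calc (1 - κs * α T ^ ds) ^ T
                ≤ Real.exp (-(κs * α T ^ ds)) ^ T := pow_le_pow_left₀ hq h1 T
              _ = Real.exp ((T : ℝ) * -(κs * α T ^ ds)) := (Real.exp_nat_mul _ T).symm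
              _ = Real.exp (-(c * w T)) := by rw [mul_neg, ← hTκ]
    exact tendsto_of_tendsto_of_tendsto_of_le_of_le' tendsto_const_nhds hub
      (Eventually.of_forall fun T => zero_le) hbound
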